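/- There exist constants C > 0 and ε₀ ∈ (0, 1) with the following property: for every ε ∈ (0, ε₀] there exist real numbers a, b with 1/2 ≤ a < b < 1 and a continuously differentiable, strictly positive, decreasing function ℓ : [a, b] → ℝ with |ℓ'(z)| ≤ 1 for all z ∈ [a,b], such that ℓ(b) + ∫_a^b ℓ'(z)² dz + ε · ( ℓ(a)^{−2} + ∫_a^b ℓ(z)^{−2} dz + ℓ(b)^{−1} )² ≤ C ε^{1/3} (log(1/ε))^{4/3}. -/

import Mathlib

open MeasureTheory intervalIntegral

noncomputable def lf (c : ℝ) (z : ℝ) : ℝ :=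
  c * Real.sqrt ((1 - z) + Real.sqrt ((1 - z)^2 + c^4))

lemma aux_q_pos {c : ℝ} (hc : 0 < c) (z : ℝ) : 0 < (1 - z)^2 + c^4 := by positivity

lemma aux_h_pos {c : ℝ} (hc : 0 < c) (z : ℝ) :
    0 < (1 - z) + Real.sqrt ((1 - z)^2 + c^4) := by
  have h1 : |1 - z| < Real.sqrt ((1 - z)^2 + c^4) := by
    have h2 : (1 - z)^2 < (1 - z)^2 + c^4 := lt_add_of_pos_right _ (by positivity)
    calc |1 - z| = Real.sqrt ((1 - z)^2) := (Real.sqrt_sq_eq_abs _).symm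
      _ < _ := Real.sqrt_lt_sqrt (sq_nonneg _) h2
  linarith [neg_abs_le (1 - z)]

lemma lf_pos {c : ℝ} (hc : 0 < c) (z : ℝ) : 0 < lf c z :=
  mul_pos hc (Real.sqrt_pos.2 (aux_h_pos hc z))

lemma aux_hasDeriv {c : ℝ} (hc : 0 < c) (z : ℝ) :
    HasDerivAt (lf c) (-(lf c z) / (2 * Real.sqrt ((1 - z)^2 + c^4))) z := by
  have hq : 0 < (1 - z)^2 + c^4 := aux_q_pos hc z
  have hh : 0 < (1 - z) + Real.sqrt ((1 - z)^2 + c^4) := aux_h_pos hc z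
  have h1 : HasDerivAt (fun z : ℝ => 1 - z) (-1) z := (hasDerivAt_id z).const_sub 1
  have h2 : HasDerivAt (fun z : ℝ => (1 - z)^2 + c^4)
      ((2:ℕ) * (1 - z)^(2-1) * (-1)) z := (h1.pow 2).add_const _
  have h3 : HasDerivAt (fun z : ℝ => Real.sqrt ((1 - z)^2 + c^4))
      (((2:ℕ) * (1 - z)^(2-1) * (-1)) / (2 * Real.sqrt ((1 - z)^2 + c^4))) z :=
    h2.sqrt hq.ne'
  have h4 := h1.add h3
  have h5 := (h4.sqrt hh.ne').const_mul c
  refine h5.congr_deriv ?_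
  symm
  have hsq : Real.sqrt ((1 - z)^2 + c^4) ≠ 0 := by positivity
  have hsh : Real.sqrt ((1 - z) + Real.sqrt ((1 - z)^2 + c^4)) ≠ 0 := by positivity
  have hmul : Real.sqrt ((1 - z) + Real.sqrt ((1 - z)^2 + c^4)) *
      Real.sqrt ((1 - z) + Real.sqrt ((1 - z)^2 + c^4))
      = (1 - z) + Real.sqrt ((1 - z)^2 + c^4) := Real.mul_self_sqrt hh.le
  simp only [lf, Pi.add_apply]
  field_simp
  linear_combination (-2:ℝ) * hmul

lemma lf_contDiff {c : ℝ} (hc : 0 < c) : ContDiff ℝ 1 (lf c) := by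
  have hd : deriv (lf c) = fun z => -(lf c z) / (2 * Real.sqrt ((1 - z)^2 + c^4)) :=
    funext fun z => (aux_hasDeriv hc z).deriv
  refine contDiff_one_iff_deriv.2 ⟨fun z => (aux_hasDeriv hc z).differentiableAt, ?_⟩
  rw [hd]
  have hqc : Continuous fun z : ℝ => (1 - z)^2 + c^4 := by continuity
  have hsc : Continuous fun z : ℝ => Real.sqrt ((1 - z)^2 + c^4) :=
    Real.continuous_sqrt.comp hqc
  have hhc : Continuous fun z : ℝ => (1 - z) + Real.sqrt ((1 - z)^2 + c^4) :=
    ((continuous_const.sub continuous_id).add hsc)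
  have hlc : Continuous (lf c) := continuous_const.mul (Real.continuous_sqrt.comp hhc)
  exact hlc.neg.div (continuous_const.mul hsc)
    (fun z => by have := aux_q_pos hc z; positivity)

lemma lf_continuous {c : ℝ} (hc : 0 < c) : Continuous (lf c) := (lf_contDiff hc).continuous

lemma aux_deriv_neg {c : ℝ} (hc : 0 < c) (z : ℝ) :
    -(lf c z) / (2 * Real.sqrt ((1 - z)^2 + c^4)) < 0 := by
  apply div_neg_of_neg_of_pos (neg_neg_of_pos (lf_pos hc z))
  have := aux_q_pos hc z; positivity

lemma aux_bounds {c z : ℝ} (hc : 0 < c) (hu : c^2 ≤ 1 - z) :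
    2*c^2*(1-z) ≤ (lf c z)^2 ∧ (lf c z)^2 ≤ 3*c^2*(1-z) ∧
    (-(lf c z)/(2*Real.sqrt ((1-z)^2+c^4)))^2 ≤ (3*c^2/4) * (1-z)⁻¹ := by
  have hu0 : 0 < 1 - z := lt_of_lt_of_le (by positivity) hu
  have hq : 0 < (1-z)^2 + c^4 := aux_q_pos hc z
  have hc4 : c^4 ≤ (1-z)^2 := by nlinarith
  have hs1 : (1-z) ≤ Real.sqrt ((1-z)^2 + c^4) := by
    have h := Real.sqrt_le_sqrt (show (1-z)^2 ≤ (1-z)^2 + c^4 from le_add_of_nonneg_right (by positivity))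
    rwa [Real.sqrt_sq hu0.le] at h
  have hs2 : Real.sqrt ((1-z)^2 + c^4) ≤ 2*(1-z) := by
    have h := Real.sqrt_le_sqrt (show (1-z)^2 + c^4 ≤ (2*(1-z))^2 by nlinarith)
    rwa [Real.sqrt_sq (by positivity)] at h
  have hlsq : (lf c z)^2 = c^2 * ((1-z) + Real.sqrt ((1-z)^2 + c^4)) := by
    simp only [lf]; rw [mul_pow, Real.sq_sqrt (aux_h_pos hc z).le]
  refine ⟨by nlinarith, by nlinarith, ?_⟩
  have hDsq : (-(lf c z)/(2*Real.sqrt ((1-z)^2+c^4)))^2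
      = c^2 * ((1-z) + Real.sqrt ((1-z)^2 + c^4)) / (4*((1-z)^2+c^4)) := by
    rw [div_pow, neg_sq, hlsq, mul_pow, Real.sq_sqrt hq.le]
    norm_num
  rw [hDsq]
  calc c^2 * ((1-z) + Real.sqrt ((1-z)^2 + c^4)) / (4*((1-z)^2+c^4))
      ≤ (3*c^2*(1-z)) / (4*(1-z)^2) := by
        apply div_le_div₀ (by positivity) (by nlinarith) (by positivity) (by nlinarith)
    _ = (3*c^2/4) * (1-z)⁻¹ := by field_simp

lemma aux_sq_le {x y : ℝ} (hx : 0 < x) (hy : 0 < y) (h : x^2 ≤ 3*y*y) : x ≤ 2*y := by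
  nlinarith [sq_nonneg (x - 2*y)]

lemma aux_le_sq {x y : ℝ} (hx : 0 < x) (hy : 0 < y) (h : 2*y*y ≤ x^2) : y ≤ x := by
  nlinarith [mul_pos hy hy]

set_option maxHeartbeats 2000000 in
/-- Scaling upper bound for the one-dimensional reduced branching problem
(eq. (1.14)): there are `C > 0` and `ε₀ ∈ (0,1)` such that for every `ε ∈ (0,ε₀]`
there exist `1/2 ≤ a < b < 1` and a continuously differentiable, strictly positive,
decreasing lengthscale function `ℓ` on `[a,b]` with `|ℓ'| ≤ 1`, satisfying
`ℓ(b) + ∫_a^b ℓ'² + ε (ℓ(a)⁻² + ∫_a^b ℓ⁻² + ℓ(b)⁻¹)² ≤ C ε^{1/3} (log(1/ε))^{4/3}`. -/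
theorem stmt11 :
    ∃ C > (0:ℝ), ∃ ε₀ ∈ Set.Ioo (0:ℝ) 1, ∀ ε ∈ Set.Ioc (0:ℝ) ε₀,
      ∃ a b : ℝ, 1/2 ≤ a ∧ a < b ∧ b < 1 ∧
        ∃ ℓ : ℝ → ℝ, ContDiff ℝ 1 ℓ ∧
          (∀ z ∈ Set.Icc a b, 0 < ℓ z) ∧
          StrictAntiOn ℓ (Set.Icc a b) ∧
          (∀ z ∈ Set.Icc a b, |deriv ℓ z| ≤ 1) ∧
          ℓ b + (∫ z in a..b, (deriv ℓ z) ^ 2)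
              + ε * (1 / (ℓ a) ^ 2 + (∫ z in a..b, 1 / (ℓ z) ^ 2) + 1 / ℓ b) ^ 2
            ≤ C * ε ^ ((1:ℝ)/3) * Real.log (1/ε) ^ ((4:ℝ)/3) := by
  refine ⟨3, by norm_num, Real.exp (-30), ⟨Real.exp_pos _, by
    rw [Real.exp_lt_one_iff]; norm_num⟩, ?_⟩
  rintro ε ⟨hε0, hεle⟩
  have hεlt1 : ε < 1 := lt_of_le_of_lt hεle (by rw [Real.exp_lt_one_iff]; norm_num)
  set L : ℝ := Real.log (1/ε) with hLdef
  have hL30 : (30:ℝ) ≤ L := by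
    have h2 : 1/Real.exp (-30) ≤ 1/ε := one_div_le_one_div_of_le hε0 hεle
    rw [Real.exp_neg, one_div, inv_inv] at h2
    calc (30:ℝ) = Real.log (Real.exp 30) := (Real.log_exp 30).symm
      _ ≤ L := Real.log_le_log (Real.exp_pos _) h2
  have hL0 : (0:ℝ) < L := by linarith
  have hL1 : (1:ℝ) ≤ L := by linarith
  set E : ℝ := ε ^ ((1:ℝ)/3) with hEdef
  set M : ℝ := L ^ ((1:ℝ)/3) with hMdef
  have hE0 : 0 < E := Real.rpow_pos_of_pos hε0 _
  have hM0 : 0 < M := Real.rpow_pos_of_pos hL0 _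
  have hE3 : E^3 = ε := by
    rw [hEdef, ← Real.rpow_natCast (ε ^ ((1:ℝ)/3)) 3, ← Real.rpow_mul hε0.le]
    norm_num
  have hM3 : M^3 = L := by
    rw [hMdef, ← Real.rpow_natCast (L ^ ((1:ℝ)/3)) 3, ← Real.rpow_mul hL0.le]
    norm_num
  have hM4 : M^4 = L ^ ((4:ℝ)/3) := by
    rw [hMdef, ← Real.rpow_natCast (L ^ ((1:ℝ)/3)) 4, ← Real.rpow_mul hL0.le]
    norm_num
  have hE1 : E ≤ 1 := Real.rpow_le_one hε0.le hεlt1.le (by norm_num)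
  have hM1 : 1 ≤ M := Real.one_le_rpow hL1 (by norm_num)
  have hM3' : (3:ℝ) ≤ M := by
    nlinarith [hM3, hL30, hM0, sq_nonneg (M - 3), sq_nonneg (M + 3)]
  set c2 : ℝ := E * M with hc2def
  have hc2 : 0 < c2 := mul_pos hE0 hM0
  have hεL : ε * L ≤ 1/64 := by
    have hsqε : 0 < Real.sqrt ε := Real.sqrt_pos.2 hε0
    have h0 : (0:ℝ) < 1/ε := by positivity
    have hlog2 : L ≤ 2 / Real.sqrt ε := by
      have h2 : Real.log (Real.sqrt (1/ε)) ≤ Real.sqrt (1/ε) - 1 :=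
        Real.log_le_sub_one_of_pos (Real.sqrt_pos.2 h0)
      have h3 : Real.sqrt (1/ε) = 1 / Real.sqrt ε := by
        rw [one_div, one_div, Real.sqrt_inv]
      calc L = 2 * Real.log (Real.sqrt (1/ε)) := by
            rw [hLdef, Real.log_sqrt h0.le]; ring
        _ ≤ 2 * Real.sqrt (1/ε) := by linarith
        _ = 2 / Real.sqrt ε := by rw [h3]; ring
    have hse : Real.sqrt ε ≤ 1/128 := by
      have h1 : Real.sqrt ε ≤ Real.sqrt (Real.exp (-30)) := Real.sqrt_le_sqrt hεle
      have h2 : Real.sqrt (Real.exp (-30)) = Real.exp (-15) := by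
        rw [show Real.exp (-30) = Real.exp (-15) ^ 2 by rw [sq, ← Real.exp_add]; norm_num,
          Real.sqrt_sq (Real.exp_pos _).le]
      have h4 : Real.exp 15 = Real.exp 5 ^ 3 := by
        rw [show (15:ℝ) = (3:ℕ) * 5 by norm_num, Real.exp_nat_mul]
      have h5 : (6:ℝ) ≤ Real.exp 5 := by linarith [Real.add_one_le_exp (5:ℝ)]
      have h3 : (128:ℝ) ≤ Real.exp 15 := by
        rw [h4]
        calc (128:ℝ) ≤ 6^3 := by norm_num
          _ ≤ Real.exp 5 ^ 3 := pow_le_pow_left₀ (by norm_num) h5 3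
      have h6 : Real.exp (-15) ≤ 1/128 := by
        rw [Real.exp_neg, one_div]
        exact inv_anti₀ (by norm_num) h3
      rw [h2] at h1; linarith
    calc ε * L ≤ ε * (2 / Real.sqrt ε) := mul_le_mul_of_nonneg_left hlog2 hε0.le
      _ = 2 * (ε / Real.sqrt ε) := by ring
      _ = 2 * Real.sqrt ε := by rw [Real.div_sqrt]
      _ ≤ 2 * (1/128) := by linarith
      _ ≤ 1/64 := by norm_num
  have hc2q : c2 ≤ 1/4 := by
    have h1 : c2 = (ε * L) ^ ((1:ℝ)/3) := by
      rw [hc2def, hEdef, hMdef, ← Real.mul_rpow hε0.le hL0.le]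
    have h2 : (ε * L) ^ ((1:ℝ)/3) ≤ ((1:ℝ)/64) ^ ((1:ℝ)/3) :=
      Real.rpow_le_rpow (by positivity) hεL (by norm_num)
    have h3 : ((1:ℝ)/64) ^ ((1:ℝ)/3) = 1/4 := by
      rw [show (1/64:ℝ) = (1/4)^(3:ℕ) by norm_num, ← Real.rpow_natCast ((1:ℝ)/4) 3,
        ← Real.rpow_mul (by norm_num)]
      norm_num
    rw [h1]; rw [h3] at h2; exact h2
  have hc2half : c2 < 1/2 := by linarith
  set c : ℝ := Real.sqrt c2 with hcdef
  have hc : 0 < c := Real.sqrt_pos.2 hc2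
  have hcsq : c^2 = c2 := Real.sq_sqrt hc2.le
  have hLneg : L = -Real.log ε := by rw [hLdef, one_div, Real.log_inv]
  clear_value c c2 M E L
  have hderiv : deriv (lf c) = fun z => -(lf c z) / (2 * Real.sqrt ((1 - z)^2 + c^4)) :=
    funext fun z => (aux_hasDeriv hc z).deriv
  refine ⟨1/2, 1 - c2, le_refl _, by linarith, by linarith, lf c, lf_contDiff hc,
    fun z _ => lf_pos hc z, ?_, ?_, ?_⟩
  · exact strictAntiOn_of_deriv_neg (convex_Icc _ _) (lf_continuous hc).continuousOn
      (fun x _ => by rw [hderiv]; exact aux_deriv_neg hc x)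
  · intro z hz
    have hu : c^2 ≤ 1 - z := by rw [hcsq]; linarith [hz.2]
    obtain ⟨-, -, h3⟩ := aux_bounds hc hu
    have hu0 : 0 < 1 - z := lt_of_lt_of_le (by positivity) hu
    have h4 : (1-z)⁻¹ ≤ (c^2)⁻¹ := inv_anti₀ (by positivity) hu
    have h5 : (-(lf c z)/(2*Real.sqrt ((1-z)^2+c^4)))^2 ≤ 1 := by
      calc (-(lf c z)/(2*Real.sqrt ((1-z)^2+c^4)))^2 ≤ (3*c^2/4) * (1-z)⁻¹ := h3
        _ ≤ (3*c^2/4) * (c^2)⁻¹ := mul_le_mul_of_nonneg_left h4 (by positivity)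
        _ = 3/4 := by field_simp
        _ ≤ 1 := by norm_num
    rw [hderiv]
    rw [← Real.sqrt_sq_eq_abs]
    calc Real.sqrt ((-(lf c z) / (2 * Real.sqrt ((1 - z)^2 + c^4)))^2)
        ≤ Real.sqrt 1 := Real.sqrt_le_sqrt h5
      _ = 1 := Real.sqrt_one
  · -- main estimate
    have hab : (1/2:ℝ) ≤ 1 - c2 := by linarith
    -- FTC for ∫ (1-z)⁻¹
    have hintg : IntervalIntegrable (fun z : ℝ => (1-z)⁻¹) volume (1/2) (1-c2) := by
      apply ContinuousOn.intervalIntegrable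
      apply ContinuousOn.inv₀ (continuous_const.sub continuous_id).continuousOn
      intro x hx
      rw [Set.uIcc_of_le hab] at hx
      have : 0 < 1 - x := by linarith [hx.2]
      exact this.ne'
    have hmem : ∀ x ∈ Set.uIcc (1/2 : ℝ) (1 - c2),
        HasDerivAt (fun z : ℝ => -Real.log (1-z)) ((1-x)⁻¹) x := by
      intro x hx
      rw [Set.uIcc_of_le hab] at hx
      have hx1 : (1 - x) ≠ 0 := by
        have : 0 < 1 - x := by linarith [hx.2]
        exact this.ne'
      have h1 : HasDerivAt (fun z : ℝ => 1 - z) (-1) x := (hasDerivAt_id x).const_sub 1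
      have h2 := (Real.hasDerivAt_log hx1).comp x h1
      have h3 := h2.neg
      refine h3.congr_deriv ?_
      ring
    have hval : (∫ z in (1/2:ℝ)..(1-c2), (1-z)⁻¹) = Real.log (1/2) - Real.log c2 := by
      rw [intervalIntegral.integral_eq_sub_of_hasDerivAt hmem hintg]
      norm_num
      ring
    have hεc2 : ε ≤ c2 := by
      have hE2 : E^2 ≤ 1 := by nlinarith
      have hA : E^3 ≤ E := by nlinarith
      have hB : E ≤ E*M := le_mul_of_one_le_right hE0.le hM1
      rw [hc2def, ← hE3]; linarith
    have hΛ : Real.log (1/2) - Real.log c2 ≤ L := by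
      have h1 : Real.log (1/2) ≤ 0 := Real.log_nonpos (by norm_num) (by norm_num)
      have h2 : Real.log ε ≤ Real.log c2 := Real.log_le_log hε0 hεc2
      linarith [hLneg]
    have hDcont : Continuous (deriv (lf c)) := (contDiff_one_iff_deriv.1 (lf_contDiff hc)).2
    have hI1int : IntervalIntegrable (fun z => (deriv (lf c) z)^2) volume (1/2) (1-c2) :=
      (hDcont.pow 2).intervalIntegrable _ _
    have hg1int : IntervalIntegrable (fun z : ℝ => (3*c2/4) * (1-z)⁻¹) volume (1/2) (1-c2) :=
      hintg.const_mul _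
    have hI1 : (∫ z in (1/2:ℝ)..(1-c2), (deriv (lf c) z)^2) ≤ (3*c2/4) * L := by
      have hmono := intervalIntegral.integral_mono_on hab hI1int hg1int (fun x hx => by
        have hu : c^2 ≤ 1 - x := by rw [hcsq]; linarith [hx.2]
        obtain ⟨-, -, h3⟩ := aux_bounds hc hu
        rw [hcsq] at h3
        simp only [hderiv]
        exact h3)
      rw [intervalIntegral.integral_const_mul, hval] at hmono
      calc (∫ z in (1/2:ℝ)..(1-c2), (deriv (lf c) z)^2)
          ≤ (3*c2/4) * (Real.log (1/2) - Real.log c2) := hmono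
        _ ≤ (3*c2/4) * L := mul_le_mul_of_nonneg_left hΛ (by positivity)
    have hI2int : IntervalIntegrable (fun z => 1/(lf c z)^2) volume (1/2) (1-c2) := by
      apply Continuous.intervalIntegrable
      exact continuous_const.div ((lf_continuous hc).pow 2)
        (fun z => pow_ne_zero 2 (lf_pos hc z).ne')
    have hg2int : IntervalIntegrable (fun z : ℝ => (1/(2*c2)) * (1-z)⁻¹) volume (1/2) (1-c2) :=
      hintg.const_mul _
    have hI2 : (∫ z in (1/2:ℝ)..(1-c2), 1/(lf c z)^2) ≤ (1/(2*c2)) * L := by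
      have hmono := intervalIntegral.integral_mono_on hab hI2int hg2int (fun x hx => by
        have hu : c^2 ≤ 1 - x := by rw [hcsq]; linarith [hx.2]
        have hu0 : 0 < 1 - x := lt_of_lt_of_le (by positivity) hu
        obtain ⟨h1, -, -⟩ := aux_bounds hc hu
        have h2 : 1/(lf c x)^2 ≤ 1/(2*c^2*(1-x)) :=
          one_div_le_one_div_of_le (by positivity) h1
        calc 1/(lf c x)^2 ≤ 1/(2*c^2*(1-x)) := h2
          _ = (1/(2*c2)) * (1-x)⁻¹ := by rw [← hcsq]; field_simp
        )
      rw [intervalIntegral.integral_const_mul, hval] at hmono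
      calc (∫ z in (1/2:ℝ)..(1-c2), 1/(lf c z)^2)
          ≤ (1/(2*c2)) * (Real.log (1/2) - Real.log c2) := hmono
        _ ≤ (1/(2*c2)) * L := mul_le_mul_of_nonneg_left hΛ (by positivity)
    have hI2nn : 0 ≤ (∫ z in (1/2:ℝ)..(1-c2), 1/(lf c z)^2) :=
      intervalIntegral.integral_nonneg hab (fun x _ => one_div_nonneg.2 (sq_nonneg _))
    -- endpoint bounds
    have hub : c^2 ≤ 1 - (1 - c2) := by rw [hcsq]; linarith
    obtain ⟨hb1, hb2, -⟩ := aux_bounds hc hub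
    rw [show (1:ℝ) - (1 - c2) = c2 from by ring, hcsq] at hb1 hb2
    have hlfb0 : 0 < lf c (1-c2) := lf_pos hc _
    have hlfb_ub : lf c (1-c2) ≤ 2*c2 := aux_sq_le hlfb0 hc2 hb2
    have hlfb_lb : c2 ≤ lf c (1-c2) := aux_le_sq hlfb0 hc2 hb1
    have h1b : 1 / lf c (1-c2) ≤ 1/c2 := one_div_le_one_div_of_le hc2 hlfb_lb
    have hua : c^2 ≤ 1 - (1/2 : ℝ) := by rw [hcsq]; linarith
    obtain ⟨ha1, -, -⟩ := aux_bounds hc hua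
    rw [hcsq] at ha1
    have ha1' : c2 ≤ (lf c (1/2))^2 := by linarith [ha1]
    have h1a : 1 / (lf c (1/2))^2 ≤ 1/c2 := one_div_le_one_div_of_le hc2 ha1'
    -- put it together
    set I2 : ℝ := ∫ z in (1/2:ℝ)..(1-c2), 1/(lf c z)^2 with hI2def
    set la : ℝ := lf c (1/2) with hladef
    set lb : ℝ := lf c (1-c2) with hlbdef
    clear_value I2 la lb
    have hS0 : 0 ≤ 1/la^2 + I2 + 1/lb := by
      have h01 : 0 ≤ 1/la^2 := one_div_nonneg.2 (sq_nonneg _)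
      have h02 : 0 ≤ 1/lb := one_div_nonneg.2 hlfb0.le
      linarith
    have hST : 1/la^2 + I2 + 1/lb ≤ (2 + L/2)/c2 := by
      have heq : (2 + L/2)/c2 = 1/c2 + (1/(2*c2)) * L + 1/c2 := by field_simp; ring
      linarith [hI2]
    have hεS : ε * (1/la^2 + I2 + 1/lb)^2 ≤ ε * ((2 + L/2)/c2)^2 :=
      mul_le_mul_of_nonneg_left (pow_le_pow_left₀ hS0 hST 2) hε0.le
    refine le_trans (add_le_add (add_le_add hlfb_ub hI1) hεS) ?_
    rw [← hM4, hc2def]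
    rw [show ε = E^3 from hE3.symm, show L = M^3 from hM3.symm]
    have hEM : (E * M) ≠ 0 := by positivity
    calc 2*(E*M) + 3*(E*M)/4*M^3 + E^3*((2 + M^3/2)/(E*M))^2
        = 2*(E*M) + (3/4)*E*M^4 + E*(2 + M^3/2)^2/M^2 := by
          field_simp
      _ ≤ 2*(E*M) + (3/4)*E*M^4 + E*(M^3)^2/M^2 := by
          have h27 : (27:ℝ) ≤ M^3 := by
            calc (27:ℝ) = 3^3 := by norm_num
              _ ≤ M^3 := pow_le_pow_left₀ (by norm_num) hM3' 3
          gcongr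
          linarith only [h27]
      _ = 2*(E*M) + (3/4)*E*M^4 + E*M^4 := by
          field_simp
      _ ≤ 3*E*M^4 := by
          have h27 : (27:ℝ) ≤ M^3 := by
            calc (27:ℝ) = 3^3 := by norm_num
              _ ≤ M^3 := pow_le_pow_left₀ (by norm_num) hM3' 3
          have h11 : 27*M ≤ M^4 := by
            calc 27*M ≤ M^3*M := mul_le_mul_of_nonneg_right h27 hM0.le
              _ = M^4 := by ring
          have h12 : (0:ℝ) ≤ M^4 := by positivity
          have h9 : 2*M ≤ (5/4)*M^4 := by linarith only [h11, h12, hM0]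
          linarith only [mul_le_mul_of_nonneg_left h9 hE0.le]
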